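/- Let M be a compact metric space, f : M → M continuous, and φ : M → ℝ bounded measurable. Fix x ∈ M and suppose for every ε > 0 there exists k_ε ∈ ℕ such that the ω-limit set ω(x, f) is contained in the interior of E_{k_ε}^ε, where E_k^ε = {w : ∑_{i=0}^{m-1} φ(f^i(w)) ≤ m(φ_-(w)+ε) for some m ∈ {1,...,k}} and φ_-(w) = liminf_n (1/n)∑_{i=0}^{n-1} φ(f^i(w)). Then lim_{n→∞} (1/n) ∑_{j=0}^{n-1} φ(f^j(x)) exists. -/

import Mathlib

open Filter

/-- Birkhoff sums. -/
noncomputable def birkSum {M : Type*} (f : M → M) (φ : M → ℝ) (n : ℕ) (x : M) : ℝ :=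
  ∑ j ∈ Finset.range n, φ (f^[j] x)

/-- Lower Birkhoff average. -/
noncomputable def birkLower {M : Type*} (f : M → M) (φ : M → ℝ) (x : M) : ℝ :=
  liminf (fun n : ℕ => birkSum f φ n x / n) atTop

section aux
variable {M : Type*} (f : M → M) (φ : M → ℝ) {C : ℝ}

lemma birkSum_succ (n : ℕ) (x : M) :
    birkSum f φ (n + 1) x = birkSum f φ n x + φ (f^[n] x) :=
  Finset.sum_range_succ _ n

lemma birkSum_add (m n : ℕ) (x : M) :
    birkSum f φ (m + n) x = birkSum f φ m x + birkSum f φ n (f^[m] x) := by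
  induction n with
  | zero => simp [birkSum]
  | succ n ih =>
      rw [← Nat.add_assoc, birkSum_succ, ih, birkSum_succ]
      rw [Nat.add_comm m n, Function.iterate_add_apply]
      ring

lemma abs_birkSum_le (hbdd : ∀ x, |φ x| ≤ C) (n : ℕ) (x : M) :
    |birkSum f φ n x| ≤ n * C := by
  calc |birkSum f φ n x| ≤ ∑ j ∈ Finset.range n, |φ (f^[j] x)| :=
        Finset.abs_sum_le_sum_abs _ _
    _ ≤ ∑ _j ∈ Finset.range n, C := Finset.sum_le_sum fun j _ => hbdd _
    _ = n * C := by simp [mul_comm]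

lemma abs_birkAvg_le (hbdd : ∀ x, |φ x| ≤ C) (hC : 0 ≤ C) (n : ℕ) (x : M) :
    |birkSum f φ n x / n| ≤ C := by
  rcases Nat.eq_zero_or_pos n with rfl | hn
  · simpa using hC
  · rw [abs_div, abs_of_nonneg (by positivity : (0:ℝ) ≤ (n:ℝ)),
      div_le_iff₀ (by exact_mod_cast hn)]
    calc |birkSum f φ n x| ≤ n * C := abs_birkSum_le f φ hbdd n x
      _ = C * n := mul_comm _ _

lemma birkSum_comp (n : ℕ) (x : M) :
    birkSum f φ n (f x) = birkSum f φ n x + φ (f^[n] x) - φ x := by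
  have h := birkSum_add f φ 1 n x
  have h' : birkSum f φ (1 + n) x = birkSum f φ n x + φ (f^[n] x) := by
    rw [Nat.add_comm, birkSum_succ]
  have h1 : birkSum f φ 1 x = φ x := by simp [birkSum]
  have : f^[1] x = f x := by simp
  rw [this, h1] at h
  linarith [h.symm.trans h']

/-- liminfs of bounded sequences differing by a null sequence coincide. -/
lemma liminf_eq_of_sub_tendsto (u v : ℕ → ℝ)
    (hu : ∀ n, |u n| ≤ C) (hv : ∀ n, |v n| ≤ C)
    (hdiff : Tendsto (fun n => u n - v n) atTop (nhds 0)) :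
    liminf u atTop = liminf v atTop := by
  have key : ∀ (a b : ℕ → ℝ), (∀ n, |a n| ≤ C) → (∀ n, |b n| ≤ C) →
      Tendsto (fun n => a n - b n) atTop (nhds 0) →
      liminf a atTop ≤ liminf b atTop := by
    intro a b ha hb hab
    refine le_of_forall_pos_le_add fun ε hε => ?_
    have hev : ∀ᶠ n in atTop, a n ≤ b n + ε := by
      filter_upwards [hab.eventually (Metric.ball_mem_nhds (0:ℝ) hε)] with n hn
      have : |a n - b n| < ε := by simpa [Real.dist_eq] using hn
      linarith [abs_lt.1 this]
    have hbb : IsBoundedUnder (· ≥ ·) atTop a :=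
      isBoundedUnder_of ⟨-C, fun n => neg_le_of_abs_le (ha n)⟩
    have hcb : IsCoboundedUnder (· ≥ ·) atTop (fun n => b n + ε) :=
      IsBoundedUnder.isCoboundedUnder_ge
        (isBoundedUnder_of ⟨C + ε, fun n => by
          have := le_of_abs_le (hb n); linarith⟩)
    calc liminf a atTop ≤ liminf (fun n => b n + ε) atTop :=
          liminf_le_liminf hev hbb hcb
      _ = liminf b atTop + ε := by
          exact liminf_add_const atTop b ε
            (IsBoundedUnder.isCoboundedUnder_ge
              (isBoundedUnder_of ⟨C, fun n => le_of_abs_le (hb n)⟩))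
            (isBoundedUnder_of ⟨-C, fun n => neg_le_of_abs_le (hb n)⟩)
  exact le_antisymm (key u v hu hv hdiff)
    (key v u hv hu (by simpa using hdiff.neg))

lemma birkLower_apply (hbdd : ∀ x, |φ x| ≤ C) (hC : 0 ≤ C) (x : M) :
    birkLower f φ (f x) = birkLower f φ x := by
  unfold birkLower
  refine liminf_eq_of_sub_tendsto (C := C) _ _
    (abs_birkAvg_le f φ hbdd hC · (f x)) (abs_birkAvg_le f φ hbdd hC · x) ?_
  have heq : ∀ n : ℕ, birkSum f φ n (f x) / n - birkSum f φ n x / n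
      = (φ (f^[n] x) - φ x) / n := by
    intro n
    rw [div_sub_div_same, birkSum_comp]
    ring_nf
  have hb : Tendsto (fun n : ℕ => (φ (f^[n] x) - φ x) / n) atTop (nhds 0) := by
    apply squeeze_zero_norm (a := fun n : ℕ => (2 * C) / n)
    · intro n
      rcases Nat.eq_zero_or_pos n with rfl | hn
      · simp
      · rw [Real.norm_eq_abs, abs_div, abs_of_nonneg (by positivity : (0:ℝ) ≤ (n:ℝ))]
        have h1 : |φ (f^[n] x) - φ x| ≤ 2 * C :=
          (abs_sub _ _).trans (by linarith [hbdd (f^[n] x), hbdd x])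
        have hn' : (0:ℝ) < n := by exact_mod_cast hn
        gcongr
    · exact Tendsto.div_atTop tendsto_const_nhds tendsto_natCast_atTop_atTop
  simpa [heq] using hb

lemma birkLower_iterate (hbdd : ∀ x, |φ x| ≤ C) (hC : 0 ≤ C) (x : M) (p : ℕ) :
    birkLower f φ (f^[p] x) = birkLower f φ x := by
  induction p with
  | zero => simp
  | succ p ih => rw [Function.iterate_succ_apply', birkLower_apply f φ hbdd hC, ih]

end aux

/-- `E_k^ε` for Birkhoff sums. -/
def ESetB {M : Type*} (f : M → M) (φ : M → ℝ) (ε : ℝ) (k : ℕ) : Set M :=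
  {x | ∃ m, 1 ≤ m ∧ m ≤ k ∧ birkSum f φ m x ≤ m * (birkLower f φ x + ε)}

/-- ω-limit set of a point under a map. -/
def omegaMap {M : Type*} [TopologicalSpace M] (f : M → M) (x : M) : Set M :=
  {y | ∃ s : ℕ → ℕ, StrictMono s ∧ Tendsto (fun k => f^[s k] x) atTop (nhds y)}

/-- If the ω-limit set of `x` lies in the interior of some `E_{k_ε}^ε` for every `ε`,
then the Birkhoff limit exists at `x`. -/
theorem birkhoff_limit_of_omega_interior {M : Type*} [MetricSpace M] [CompactSpace M]
    [MeasurableSpace M] [BorelSpace M]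
    (f : M → M) (hf : Continuous f)
    (φ : M → ℝ) (hφ : Measurable φ) (C : ℝ) (hbdd : ∀ x, |φ x| ≤ C) (x : M)
    (h : ∀ ε : ℝ, 0 < ε → ∃ kε : ℕ,
      omegaMap f x ⊆ interior (ESetB f φ ε kε)) :
    ∃ L : ℝ, Tendsto (fun n : ℕ => birkSum f φ n x / n) atTop (nhds L) := by
  have hC : 0 ≤ C := (abs_nonneg _).trans (hbdd x)
  set a := birkLower f φ x with ha
  have hubdd : ∀ n : ℕ, |birkSum f φ n x / n| ≤ C :=
    fun n => abs_birkAvg_le f φ hbdd hC n x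
  -- the key upper estimate
  have hupper : ∀ ε : ℝ, 0 < ε →
      ∀ᶠ n : ℕ in atTop, birkSum f φ n x / n < a + 2 * ε := by
    intro ε hε
    obtain ⟨k, hk⟩ := h ε hε
    -- Step A: the orbit eventually lies in the interior of E
    have hA : ∀ᶠ n : ℕ in atTop, f^[n] x ∈ interior (ESetB f φ ε k) := by
      by_contra hA
      rw [Filter.not_eventually] at hA
      obtain ⟨s, hs, hmem⟩ := Filter.extraction_of_frequently_atTop hA
      have hcpt : IsCompact ((interior (ESetB f φ ε k))ᶜ) :=
        isOpen_interior.isClosed_compl.isCompact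
      obtain ⟨y, hy, ψ, hψ, hty⟩ :=
        hcpt.tendsto_subseq (x := fun n => f^[s n] x) (fun n => hmem n)
      exact hy (hk ⟨s ∘ ψ, hs.comp hψ, hty⟩)
    obtain ⟨N, hN⟩ := eventually_atTop.1 hA
    -- Step B: membership in E with invariant lower average
    have hE : ∀ p, N ≤ p → ∃ m, 1 ≤ m ∧ m ≤ k ∧
        birkSum f φ m (f^[p] x) ≤ m * (a + ε) := by
      intro p hp
      obtain ⟨m, h1, h2, h3⟩ := interior_subset (hN p hp)
      rw [birkLower_iterate f φ hbdd hC x p] at h3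
      exact ⟨m, h1, h2, h3⟩
    set K : ℝ := k * C + k * |a + ε| with hK
    -- Step C: block decomposition, by strong induction
    have key : ∀ n : ℕ, ∀ p : ℕ, N ≤ p →
        birkSum f φ n (f^[p] x) ≤ n * (a + ε) + K := by
      intro n
      induction n using Nat.strong_induction_on with
      | _ n ih =>
        intro p hp
        by_cases hnk : n ≤ k
        · have h1 := abs_birkSum_le f φ hbdd n (f^[p] x)
          have hcast : (n : ℝ) ≤ (k : ℝ) := by exact_mod_cast hnk
          have h2 : -((n : ℝ) * |a + ε|) ≤ (n : ℝ) * (a + ε) := by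
            nlinarith [neg_abs_le (a + ε), Nat.cast_nonneg (α := ℝ) n]
          have h3 : (n : ℝ) * |a + ε| ≤ (k : ℝ) * |a + ε| :=
            mul_le_mul_of_nonneg_right hcast (abs_nonneg _)
          have h4 : (n : ℝ) * C ≤ (k : ℝ) * C :=
            mul_le_mul_of_nonneg_right hcast hC
          have h5 := le_of_abs_le h1
          rw [hK]; linarith
        · push_neg at hnk
          obtain ⟨m, hm1, hmk, hm3⟩ := hE p hp
          have hmn : m < n := lt_of_le_of_lt hmk hnk
          have hsplit : birkSum f φ n (f^[p] x)
              = birkSum f φ m (f^[p] x) + birkSum f φ (n - m) (f^[m] (f^[p] x)) := by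
            rw [← birkSum_add]; congr 1; omega
          have hit : f^[m] (f^[p] x) = f^[p + m] x := by
            rw [← Function.iterate_add_apply]; congr 1; omega
          have ihh := ih (n - m) (by omega) (p + m) (by omega)
          have hcast : ((n - m : ℕ) : ℝ) = (n : ℝ) - m := by
            rw [Nat.cast_sub hmn.le]
          rw [hsplit, hit]
          rw [hcast] at ihh
          linarith
    -- conclude: compare with a sequence tending to a + ε
    set D : ℝ := birkSum f φ N x - N * (a + ε) + K with hD
    have hev2 : ∀ n : ℕ, N ≤ n →
        birkSum f φ n x ≤ D + n * (a + ε) := by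
      intro n hn
      have hadd := birkSum_add f φ N (n - N) x
      have hNn : N + (n - N) = n := by omega
      rw [hNn] at hadd
      have hkey := key (n - N) N le_rfl
      have hcast : ((n - N : ℕ) : ℝ) = (n : ℝ) - N := by rw [Nat.cast_sub hn]
      rw [hcast] at hkey
      rw [hD]; nlinarith [hkey, hadd]
    have hv : Tendsto (fun n : ℕ => D / n + (a + ε)) atTop (nhds (a + ε)) := by
      have := (tendsto_const_nhds (x := D)).div_atTop
        (tendsto_natCast_atTop_atTop (R := ℝ))
      simpa using this.add (tendsto_const_nhds (x := a + ε))
    have hlt : ∀ᶠ n : ℕ in atTop, D / n + (a + ε) < a + 2 * ε :=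
      hv.eventually_lt_const (by linarith)
    filter_upwards [hlt, eventually_ge_atTop (max N 1)] with n hn1 hn2
    have hn0 : (0 : ℝ) < n := by
      have : 1 ≤ n := le_trans (le_max_right N 1) hn2
      exact_mod_cast this
    have hbd := hev2 n (le_trans (le_max_left N 1) hn2)
    have : birkSum f φ n x / n ≤ D / n + (a + ε) := by
      rw [div_add' _ _ _ hn0.ne']
      exact div_le_div_of_nonneg_right (by linarith) hn0.le
    linarith
  refine ⟨a, tendsto_order.2 ⟨fun b hb => ?_, fun b hb => ?_⟩⟩
  · exact eventually_lt_of_lt_liminf hb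
      (isBoundedUnder_of ⟨-C, fun n => neg_le_of_abs_le (hubdd n)⟩)
  · have hε : 0 < (b - a) / 2 := by linarith
    filter_upwards [hupper _ hε] with n hn
    calc birkSum f φ n x / n < a + 2 * ((b - a) / 2) := hn
      _ = b := by ring
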